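/- For α, β ∈ ℝ define g_{α,β}(ε, z) = (ε² − 2ε√(1−2z) + 1)^{−α/2} · (1−2z)^{−β/2} on the domain 0 < ε < 1, 0 < z < 1/2, and define coefficients c_j^{(h)}(α,β) by c_0^{(0)} = 1 and c_j^{(h+1)} = −(α+2j−2)·c_{j−1}^{(h)} + (β+2h−j)·c_j^{(h)} (with c_{−1}^{(h)} = c_{h+1}^{(h)} = 0). Then for every h ∈ ℕ and every (ε, z) in the domain, the h-th partial derivative in z satisfies ∂_z^h g_{α,β}(ε, z) = Σ_{j=0}^{h} c_j^{(h)}(α,β) · ε^j · g_{α+2j, β+2h−j}(ε, z). -/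

import Mathlib

open Real

/-- The auxiliary functions `g_{α,β}(ε,z) = (ε² − 2ε√(1−2z) + 1)^{−α/2}·(1−2z)^{−β/2}`. -/
noncomputable def gab (α β ε z : ℝ) : ℝ :=
  (ε ^ 2 - 2 * ε * Real.sqrt (1 - 2 * z) + 1) ^ (-α / 2) * (1 - 2 * z) ^ (-β / 2)

/-- The coefficients `c_j^{(h)}(α,β)`: `c_0^{(0)} = 1`,
`c_j^{(h+1)} = −(α+2j−2)·c_{j−1}^{(h)} + (β+2h−j)·c_j^{(h)}`,
with the conventions `c_{−1}^{(h)} = 0` and `c_j^{(h)} = 0` for `j > h`. -/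
noncomputable def ccoef (α β : ℝ) : ℕ → ℕ → ℝ
  | 0, j => if j = 0 then 1 else 0
  | h + 1, j =>
      (-(α + 2 * (j : ℝ) - 2)) * (if j = 0 then 0 else ccoef α β h (j - 1)) +
        (β + 2 * (h : ℝ) - (j : ℝ)) * ccoef α β h j

lemma ccoef_eq_zero (α β : ℝ) : ∀ h j, h < j → ccoef α β h j = 0 := by
  intro h
  induction h with
  | zero => intro j hj; rw [ccoef, if_neg (by omega)]
  | succ h IH =>
      intro j hj
      have hj0 : j ≠ 0 := by omega
      rw [ccoef, if_neg hj0, IH (j-1) (by omega), IH j (by omega)]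
      ring

lemma gab_hasDerivAt (α β ε : ℝ) (hε0 : 0 < ε) (hε1 : ε < 1) {z : ℝ}
    (hz0 : 0 < z) (hz1 : z < 1/2) :
    HasDerivAt (fun z' => gab α β ε z')
      (-α * ε * gab (α+2) (β+1) ε z + β * gab α (β+2) ε z) z := by
  set B := 1 - 2*z with hBdef
  have hB0 : 0 < B := by simp only [hBdef]; linarith
  have hB1 : B < 1 := by simp only [hBdef]; linarith
  have hs0 : 0 < Real.sqrt B := Real.sqrt_pos.mpr hB0
  have hsq : Real.sqrt B ^ 2 = B := Real.sq_sqrt hB0.le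
  have hA0 : 0 < ε ^ 2 - 2 * ε * Real.sqrt B + 1 := by
    nlinarith [sq_nonneg (ε - Real.sqrt B)]
  have hB' : HasDerivAt (fun z' : ℝ => 1 - 2*z') (-2) z := by
    simpa using (hasDerivAt_const z (1:ℝ)).fun_sub ((hasDerivAt_id z).const_mul 2)
  have hsqrt : HasDerivAt (fun z' => Real.sqrt (1 - 2*z')) ((-2) / (2 * Real.sqrt B)) z :=
    hB'.sqrt hB0.ne'
  have hA' : HasDerivAt (fun z' => ε ^ 2 - 2 * ε * Real.sqrt (1 - 2*z') + 1)
      (-(2 * ε * ((-2) / (2 * Real.sqrt B)))) z := by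
    simpa using (((hsqrt.const_mul (2*ε)).const_sub (ε^2)).add_const 1)
  have hApow : HasDerivAt (fun z' => (ε ^ 2 - 2 * ε * Real.sqrt (1 - 2*z') + 1) ^ (-α/2))
      ((-(2 * ε * ((-2) / (2 * Real.sqrt B)))) * (-α/2) *
        (ε ^ 2 - 2 * ε * Real.sqrt B + 1) ^ (-α/2 - 1)) z :=
    hA'.rpow_const (Or.inl hA0.ne')
  have hBpow : HasDerivAt (fun z' => (1 - 2*z') ^ (-β/2))
      ((-2) * (-β/2) * B ^ (-β/2 - 1)) z :=
    hB'.rpow_const (Or.inl hB0.ne')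
  have hmul : HasDerivAt (fun z' => gab α β ε z') _ z := hApow.fun_mul hBpow
  convert hmul using 1
  simp only [gab, ← hBdef]
  set A := ε ^ 2 - 2 * ε * Real.sqrt B + 1 with hAdef
  have e1 : (-(α+2)/2 : ℝ) = -α/2 - 1 := by ring
  have e2 : (-(β+2)/2 : ℝ) = -β/2 - 1 := by ring
  have e3 : (-(β+1)/2 : ℝ) = (-β/2 - 1) + (1/2 : ℝ) := by ring
  rw [e1, e2, e3, Real.rpow_add hB0, ← Real.sqrt_eq_rpow,
    show (-β/2 : ℝ) = (-β/2 - 1) + 1 by ring, Real.rpow_add hB0, Real.rpow_one]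
  set s := Real.sqrt B with hsdef
  set P := A ^ (-α / 2 - 1) with hP
  set Q := B ^ (-β / 2 - 1) with hQ
  set R := A ^ (-α / 2) with hR
  rw [hQ, ← hsq]
  clear_value B A s P R
  have hsne : s ≠ 0 := hs0.ne'
  field_simp
  ring

lemma sum_step (α β ε : ℝ) (h : ℕ) (G : ℝ → ℝ → ℝ) :
    ∑ j ∈ Finset.range (h + 1 + 1),
        ccoef α β (h + 1) j * ε ^ j * G (α + 2 * (j : ℝ)) (β + 2 * ((h : ℝ) + 1) - (j : ℝ))
      = ∑ j ∈ Finset.range (h + 1), ccoef α β h j * ε ^ j *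
          (-(α + 2 * (j : ℝ)) * ε * G (α + 2 * (j : ℝ) + 2) (β + 2 * (h : ℝ) - (j : ℝ) + 1)
            + (β + 2 * (h : ℝ) - (j : ℝ)) * G (α + 2 * (j : ℝ)) (β + 2 * (h : ℝ) - (j : ℝ) + 2)) := by
  have expand : ∀ j ∈ Finset.range (h + 1 + 1),
      ccoef α β (h + 1) j * ε ^ j * G (α + 2 * (j : ℝ)) (β + 2 * ((h : ℝ) + 1) - (j : ℝ))
        = ((-(α + 2 * (j : ℝ) - 2)) * (if j = 0 then 0 else ccoef α β h (j - 1)) * ε ^ j *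
              G (α + 2 * (j : ℝ)) (β + 2 * ((h : ℝ) + 1) - (j : ℝ)))
          + ((β + 2 * (h : ℝ) - (j : ℝ)) * ccoef α β h j * ε ^ j *
              G (α + 2 * (j : ℝ)) (β + 2 * ((h : ℝ) + 1) - (j : ℝ))) := by
    intro j _
    rw [ccoef]; ring
  rw [Finset.sum_congr rfl expand, Finset.sum_add_distrib]
  rw [Finset.sum_range_succ' (fun j => (-(α + 2 * (j : ℝ) - 2)) *
      (if j = 0 then 0 else ccoef α β h (j - 1)) * ε ^ j *
      G (α + 2 * (j : ℝ)) (β + 2 * ((h : ℝ) + 1) - (j : ℝ))) (h + 1)]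
  rw [Finset.sum_range_succ (fun j => (β + 2 * (h : ℝ) - (j : ℝ)) * ccoef α β h j * ε ^ j *
      G (α + 2 * (j : ℝ)) (β + 2 * ((h : ℝ) + 1) - (j : ℝ))) (h + 1)]
  rw [ccoef_eq_zero α β h (h + 1) (by omega)]
  norm_num
  rw [← Finset.sum_add_distrib]
  refine Finset.sum_congr rfl fun j _ => ?_
  have harg1 : (α + 2 * ((j : ℝ) + 1)) = α + 2 * (j : ℝ) + 2 := by ring
  have harg2 : (β + 2 * ((h : ℝ) + 1) - ((j : ℝ) + 1)) = β + 2 * (h : ℝ) - (j : ℝ) + 1 := by ring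
  have harg3 : (β + 2 * ((h : ℝ) + 1) - (j : ℝ)) = β + 2 * (h : ℝ) - (j : ℝ) + 2 := by ring
  rw [harg1, harg2, harg3]
  ring

/-- the `h`-th `z`-derivative of `g_{α,β}` is
`Σ_{j=0}^{h} c_j^{(h)}(α,β)·ε^j·g_{α+2j, β+2h−j}(ε,z)` on `0 < ε < 1`, `0 < z < 1/2`. -/
theorem stmt_13 (α β : ℝ) (h : ℕ) (ε z : ℝ)
    (hε0 : 0 < ε) (hε1 : ε < 1) (hz0 : 0 < z) (hz1 : z < 1 / 2) :
    iteratedDeriv h (fun z' => gab α β ε z') z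
      = ∑ j ∈ Finset.range (h + 1),
          ccoef α β h j * ε ^ j * gab (α + 2 * (j : ℝ)) (β + 2 * (h : ℝ) - (j : ℝ)) ε z := by
  induction h generalizing z with
  | zero => simp [ccoef]
  | succ h IH =>
      rw [iteratedDeriv_succ]
      have heq : (iteratedDeriv h (fun z' => gab α β ε z')) =ᶠ[nhds z]
          (fun z' => ∑ j ∈ Finset.range (h + 1),
            ccoef α β h j * ε ^ j * gab (α + 2 * (j : ℝ)) (β + 2 * (h : ℝ) - (j : ℝ)) ε z') := by
        filter_upwards [Ioo_mem_nhds hz0 hz1] with w hw using IH w hw.1 hw.2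
      rw [heq.deriv_eq]
      have hF : HasDerivAt (fun z' => ∑ j ∈ Finset.range (h + 1),
          ccoef α β h j * ε ^ j * gab (α + 2 * (j : ℝ)) (β + 2 * (h : ℝ) - (j : ℝ)) ε z')
          (∑ j ∈ Finset.range (h + 1), ccoef α β h j * ε ^ j *
            (-(α + 2 * (j : ℝ)) * ε * gab (α + 2 * (j : ℝ) + 2) (β + 2 * (h : ℝ) - (j : ℝ) + 1) ε z
              + (β + 2 * (h : ℝ) - (j : ℝ)) * gab (α + 2 * (j : ℝ)) (β + 2 * (h : ℝ) - (j : ℝ) + 2) ε z)) z := by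
        refine HasDerivAt.fun_sum fun j _ => ?_
        exact (gab_hasDerivAt (α + 2 * (j : ℝ)) (β + 2 * (h : ℝ) - (j : ℝ)) ε hε0 hε1 hz0 hz1).const_mul _
      rw [hF.deriv]
      rw [show ((h : ℕ) + 1 : ℕ) + 1 = h + 1 + 1 from rfl]
      push_cast
      exact (sum_step α β ε h (fun a b => gab a b ε z)).symm
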